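/- Let D⁰, D¹ : ℕ → Type each carry, for every n, a free action of Equiv.Perm (Fin n), and let t : ∀ n, D¹ n → D⁰ n be equivariant maps. Write 𝔻⁰ and 𝔻¹ for the associated endofunctors of types, and for a function u : X₁ → X₀ write t∗u : 𝔻¹X₁ → 𝔻⁰X₀ for the map induced by (d, x) ↦ (t d, u ∘ x). Suppose given functions T : C₁ → C₀, T' : C'₁ → C'₀, F₁ : C₁ → C'₁, F₀ : C₀ → C'₀ with F₀ ∘ T = T' ∘ F₁ forming a pullback square of types. Then the square with horizontal maps t∗T : 𝔻¹C₁ → 𝔻⁰C₀ and t∗T' : 𝔻¹C'₁ → 𝔻⁰C'₀ and vertical maps 𝔻¹F₁ and 𝔻⁰F₀ is again a pullback square of types. (This expresses, at the level of object and morphism sets, that the monad associated to a Σ-free categorical operad preserves target covers and source covers of categories.) -/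

import Mathlib

/-- The relation on `D n × (Fin n → X)` identifying `(d, x)` with
`σ • (d, x) = (σ • d, x ∘ σ⁻¹)`. -/
def OpRel (D : ℕ → Type) [∀ n, MulAction (Equiv.Perm (Fin n)) (D n)] (X : Type) (n : ℕ)
    (p q : D n × (Fin n → X)) : Prop :=
  ∃ σ : Equiv.Perm (Fin n), σ • p.1 = q.1 ∧ p.2 ∘ σ.symm = q.2

/-- The endofunctor of types associated to a family `D` with symmetric group actions. -/
def DD (D : ℕ → Type) [∀ n, MulAction (Equiv.Perm (Fin n)) (D n)] (X : Type) : Type :=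
  Σ n : ℕ, Quot (OpRel D X n)

/-- The action of the endofunctor `𝔻` on functions, induced by `(d, x) ↦ (d, f ∘ x)`. -/
def DDmap (D : ℕ → Type) [∀ n, MulAction (Equiv.Perm (Fin n)) (D n)] {X Y : Type}
    (f : X → Y) : DD D X → DD D Y :=
  fun a => ⟨a.1, Quot.map (fun p => (p.1, f ∘ p.2))
    (fun p q hpq => by
      obtain ⟨σ, h1, h2⟩ := hpq
      exact ⟨σ, h1, congrArg (fun u => f ∘ u) h2⟩) a.2⟩

/-- The map `t∗u : 𝔻¹X₁ → 𝔻⁰X₀` induced by an equivariant family `t : ∀ n, D¹ n → D⁰ n`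
and a function `u : X₁ → X₀`, via `(d, x) ↦ (t d, u ∘ x)`. -/
def DDtmap (D0 D1 : ℕ → Type)
    [∀ n, MulAction (Equiv.Perm (Fin n)) (D0 n)] [∀ n, MulAction (Equiv.Perm (Fin n)) (D1 n)]
    (t : ∀ n, D1 n → D0 n)
    (ht : ∀ (n : ℕ) (σ : Equiv.Perm (Fin n)) (d : D1 n), t n (σ • d) = σ • t n d)
    {X1 X0 : Type} (u : X1 → X0) : DD D1 X1 → DD D0 X0 :=
  fun a => ⟨a.1, Quot.map (fun p => (t a.1 p.1, u ∘ p.2))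
    (fun p q hpq => by
      obtain ⟨σ, h1, h2⟩ := hpq
      exact ⟨σ, (ht a.1 σ p.1).symm.trans (congrArg (t a.1) h1),
        congrArg (fun v => u ∘ v) h2⟩) a.2⟩

/-- A commutative square of types which is a pullback square. -/
def IsPB {A B C Z : Type*} (f : A → B) (j : A → C) (h : B → Z) (k : C → Z) : Prop :=
  (∀ a, h (f a) = k (j a)) ∧ ∀ (b : B) (c : C), h b = k c → ∃! a : A, f a = b ∧ j a = c

lemma opRel_equiv (D : ℕ → Type) [∀ n, MulAction (Equiv.Perm (Fin n)) (D n)] (X : Type) (n : ℕ) :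
    Equivalence (OpRel D X n) := by
  constructor
  · intro p
    exact ⟨1, one_smul _ _, by ext i; rfl⟩
  · rintro p q ⟨σ, h1, h2⟩
    refine ⟨σ⁻¹, ?_, ?_⟩
    · rw [← h1, inv_smul_smul]
    · rw [← h2]; ext i; simp [Equiv.Perm.inv_def]
  · rintro p q r ⟨σ, h1, h2⟩ ⟨τ, h3, h4⟩
    refine ⟨τ * σ, ?_, ?_⟩
    · rw [mul_smul, h1, h3]
    · rw [← h4, ← h2]; ext i; simp [Equiv.Perm.mul_def]

lemma opRel_of_eq {D : ℕ → Type} [∀ n, MulAction (Equiv.Perm (Fin n)) (D n)] {X : Type} {n : ℕ}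
    {p q : D n × (Fin n → X)} (h : Quot.mk (OpRel D X n) p = Quot.mk (OpRel D X n) q) :
    OpRel D X n p q :=
  (opRel_equiv D X n).eqvGen_iff.mp (Quot.eqvGen_exact h)

/-- The monad associated to a Σ-free categorical operad preserves target covers and source
covers, expressed at the level of object and morphism sets. -/
theorem DD_preserves_covers
    (D0 D1 : ℕ → Type)
    [∀ n, MulAction (Equiv.Perm (Fin n)) (D0 n)] [∀ n, MulAction (Equiv.Perm (Fin n)) (D1 n)]
    (free0 : ∀ (n : ℕ) (σ : Equiv.Perm (Fin n)) (d : D0 n), σ • d = d → σ = 1)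
    (free1 : ∀ (n : ℕ) (σ : Equiv.Perm (Fin n)) (d : D1 n), σ • d = d → σ = 1)
    (t : ∀ n, D1 n → D0 n)
    (ht : ∀ (n : ℕ) (σ : Equiv.Perm (Fin n)) (d : D1 n), t n (σ • d) = σ • t n d)
    {C1 C0 C1' C0' : Type}
    (T : C1 → C0) (T' : C1' → C0') (F1 : C1 → C1') (F0 : C0 → C0')
    (hpb : IsPB T F1 F0 T') :
    IsPB (DDtmap D0 D1 t ht T) (DDmap D1 F1) (DDmap D0 F0) (DDtmap D0 D1 t ht T') := by
  obtain ⟨hcomm, hlift⟩ := hpb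
  constructor
  · rintro ⟨n, a⟩
    induction a using Quot.ind with
    | _ p =>
      obtain ⟨d, x⟩ := p
      show (⟨n, Quot.mk _ (t n d, F0 ∘ (T ∘ x))⟩ : DD D0 C0')
          = ⟨n, Quot.mk _ (t n d, T' ∘ (F1 ∘ x))⟩
      have : F0 ∘ (T ∘ x) = T' ∘ (F1 ∘ x) := funext fun i => hcomm (x i)
      rw [this]
  · rintro ⟨n, b⟩ ⟨m, c⟩ h
    obtain ⟨⟨e, y⟩, rfl⟩ := Quot.exists_rep b
    obtain ⟨⟨d', z⟩, rfl⟩ := Quot.exists_rep c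
    have h' : (⟨n, Quot.mk _ (e, F0 ∘ y)⟩ : DD D0 C0')
        = ⟨m, Quot.mk _ (t m d', T' ∘ z)⟩ := h
    obtain ⟨rfl, h2⟩ : n = m ∧ HEq (Quot.mk (OpRel D0 C0' n) (e, F0 ∘ y))
        (Quot.mk (OpRel D0 C0' m) (t m d', T' ∘ z)) := by
      exact ⟨congrArg Sigma.fst h', by injection h'⟩
    obtain ⟨σ, hσ1, hσ2⟩ := opRel_of_eq (eq_of_heq h2)
    replace hσ1 : σ • e = t n d' := hσ1
    replace hσ2 : (F0 ∘ y) ∘ ⇑σ.symm = T' ∘ z := hσ2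
    have hcompat : ∀ i, F0 (y i) = T' (z (σ i)) := by
      intro i
      have := congrFun hσ2 (σ i)
      simpa using this
    let x0 : Fin n → C1 := fun i => (hlift (y i) (z (σ i)) (hcompat i)).choose
    have hx0 : ∀ i, T (x0 i) = y i ∧ F1 (x0 i) = z (σ i) :=
      fun i => (hlift (y i) (z (σ i)) (hcompat i)).choose_spec.1
    have hx0u : ∀ i (a : C1), T a = y i ∧ F1 a = z (σ i) → a = x0 i :=
      fun i => (hlift (y i) (z (σ i)) (hcompat i)).choose_spec.2
    refine ⟨⟨n, Quot.mk _ (σ⁻¹ • d', x0)⟩, ⟨?_, ?_⟩, ?_⟩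
    · show (⟨n, Quot.mk _ (t n (σ⁻¹ • d'), T ∘ x0)⟩ : DD D0 C0)
        = ⟨n, Quot.mk _ (e, y)⟩
      have h1 : t n (σ⁻¹ • d') = e := by
        rw [ht, ← hσ1, inv_smul_smul]
      have h2 : T ∘ x0 = y := funext fun i => (hx0 i).1
      rw [h1, h2]
    · show (⟨n, Quot.mk _ (σ⁻¹ • d', F1 ∘ x0)⟩ : DD D1 C1')
        = ⟨n, Quot.mk _ (d', z)⟩
      congr 1
      apply Quot.sound
      refine ⟨σ, by simp, ?_⟩
      ext j
      show F1 (x0 (σ.symm j)) = z j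
      rw [(hx0 (σ.symm j)).2, Equiv.apply_symm_apply]
    · rintro ⟨k, q⟩ ⟨ha1, ha2⟩
      obtain ⟨⟨d, x⟩, rfl⟩ := Quot.exists_rep q
      have ha1' : (⟨k, Quot.mk _ (t k d, T ∘ x)⟩ : DD D0 C0)
          = ⟨n, Quot.mk _ (e, y)⟩ := ha1
      obtain ⟨rfl, hb2⟩ : k = n ∧ HEq (Quot.mk (OpRel D0 C0 k) (t k d, T ∘ x))
          (Quot.mk (OpRel D0 C0 n) (e, y)) := ⟨congrArg Sigma.fst ha1', by injection ha1'⟩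
      obtain ⟨τ, hτ1, hτ2⟩ := opRel_of_eq (eq_of_heq hb2)
      replace hτ1 : τ • t _ d = e := hτ1
      replace hτ2 : (T ∘ x) ∘ ⇑τ.symm = y := hτ2
      have ha2' : (⟨k, Quot.mk _ (d, F1 ∘ x)⟩ : DD D1 C1')
          = ⟨k, Quot.mk _ (d', z)⟩ := ha2
      have hb3 : Quot.mk (OpRel D1 C1' k) (d, F1 ∘ x) = Quot.mk (OpRel D1 C1' k) (d', z) :=
        eq_of_heq (Sigma.mk.inj_iff.mp ha2').2
      obtain ⟨ρ, hρ1, hρ2⟩ := opRel_of_eq hb3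
      replace hρ1 : ρ • d = d' := hρ1
      replace hρ2 : (F1 ∘ x) ∘ ⇑ρ.symm = z := hρ2
      -- show ρ = σ * τ
      have hfix : (ρ⁻¹ * σ * τ) • t k d = t k d := by
        have e1 : t k d' = ρ • t k d := by rw [← hρ1, ht]
        have : σ • (τ • t k d) = ρ • t k d := by rw [hτ1, hσ1, e1]
        rw [mul_smul, mul_smul, this, inv_smul_smul]
      have hρστ : ρ = σ * τ := by
        have h1 : ρ⁻¹ * (σ * τ) = 1 := by rw [← mul_assoc]; exact free0 _ _ _ hfix
        exact inv_mul_eq_one.mp h1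
      congr 1
      apply Quot.sound
      refine ⟨τ, ?_, ?_⟩
      · show τ • d = σ⁻¹ • d'
        rw [← hρ1, hρστ, mul_smul, inv_smul_smul]
      · ext i
        show x (τ.symm i) = x0 i
        apply hx0u
        constructor
        · exact congrFun hτ2 i
        · have := congrFun hρ2 (σ i)
          simp only [Function.comp] at this ⊢
          rw [← this]
          congr 1
          rw [hρστ]
          simp [Equiv.Perm.mul_def, Equiv.Perm.inv_def]
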